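/- Let S ≤ M n be a submodule. The map swap restricts to a Pauli-weight-preserving bijection from the set {v ∈ M n : (∀ s ∈ S, ω(v,s) = 0) ∧ v ∉ S} onto the set {w ∈ M n : (∀ s ∈ S, ⟨w,s⟩ = 0) ∧ w ∉ swap '' S}, where ⟨w,s⟩ = Σ_j ((w j).1·(s j).1 + (w j).2·(s j).2) is the standard dot product. In particular, the minimum Pauli weight over the first set equals the minimum Pauli weight over the second set. (This shows the ququad CSS code obtained from an [[n,k,d]] stabilizer code via the map of Lemma 1 again has distance d.) -/
import Mathlib


/-- Binary symplectic representation of `n`-qubit Pauli operators (up to phase). -/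
abbrev M (n : ℕ) : Type := Fin n → ZMod 2 × ZMod 2

/-- The symplectic form: two Paulis commute iff it vanishes. -/
def symp {n : ℕ} (u v : M n) : ZMod 2 :=
  ∑ j, ((u j).1 * (v j).2 + (u j).2 * (v j).1)

/-- The standard dot product on `M n`. -/
def dotM {n : ℕ} (u v : M n) : ZMod 2 :=
  ∑ j, ((u j).1 * (v j).1 + (u j).2 * (v j).2)

/-- The involution swapping the X- and Z-parts on every qubit. -/
def swapP {n : ℕ} (v : M n) : M n := fun j => ((v j).2, (v j).1)

/-- The (Pauli) weight: the number of qubits on which `v` acts nontrivially. -/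
def wt {n : ℕ} (v : M n) : ℕ := (Finset.univ.filter fun j => v j ≠ 0).card

lemma swap_swap {n : ℕ} (v : M n) : swapP (swapP v) = v := by
  funext j; simp [swapP]

lemma dot_swap {n : ℕ} (v s : M n) : dotM (swapP v) s = symp v s := by
  unfold dotM symp swapP
  apply Finset.sum_congr rfl
  intro j _; ring

lemma wt_swap {n : ℕ} (v : M n) : wt (swapP v) = wt v := by
  unfold wt
  congr 1
  apply Finset.filter_congr
  intro j _
  constructor
  · intro h hv; apply h; simp [swapP, hv]
  · intro h hv; apply h
    have := congrArg Prod.fst hv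
    have := congrArg Prod.snd hv
    ext <;> simp_all [swapP]

theorem stmt1 (n : ℕ) (S : Submodule (ZMod 2) (M n)) :
    Set.BijOn swapP
      {v : M n | (∀ s ∈ S, symp v s = 0) ∧ v ∉ S}
      {w : M n | (∀ s ∈ S, dotM w s = 0) ∧ w ∉ swapP '' (S : Set (M n))} ∧
    (∀ v : M n, wt (swapP v) = wt v) ∧
    sInf (wt '' {v : M n | (∀ s ∈ S, symp v s = 0) ∧ v ∉ S}) =
      sInf (wt '' {w : M n | (∀ s ∈ S, dotM w s = 0) ∧ w ∉ swapP '' (S : Set (M n))}) := by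
  have hmaps : ∀ v : M n, ((∀ s ∈ S, symp v s = 0) ∧ v ∉ S) →
      ((∀ s ∈ S, dotM (swapP v) s = 0) ∧ swapP v ∉ swapP '' (S : Set (M n))) := by
    intro v ⟨h1, h2⟩
    refine ⟨fun s hs => by rw [dot_swap]; exact h1 s hs, ?_⟩
    rintro ⟨x, hx, hxe⟩
    have : x = v := by
      have := congrArg swapP hxe; rwa [swap_swap, swap_swap] at this
    exact h2 (this ▸ hx)
  have hback : ∀ w : M n, ((∀ s ∈ S, dotM w s = 0) ∧ w ∉ swapP '' (S : Set (M n))) →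
      ((∀ s ∈ S, symp (swapP w) s = 0) ∧ swapP w ∉ S) := by
    intro w ⟨h1, h2⟩
    refine ⟨fun s hs => by rw [← dot_swap, swap_swap]; exact h1 s hs, ?_⟩
    intro hmem
    exact h2 ⟨swapP w, hmem, swap_swap w⟩
  have hbij : Set.BijOn swapP
      {v : M n | (∀ s ∈ S, symp v s = 0) ∧ v ∉ S}
      {w : M n | (∀ s ∈ S, dotM w s = 0) ∧ w ∉ swapP '' (S : Set (M n))} := by
    refine ⟨fun v hv => hmaps v hv, ?_, ?_⟩
    · intro a _ b _ hab
      have := congrArg swapP hab; rwa [swap_swap, swap_swap] at this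
    · intro w hw
      exact ⟨swapP w, hback w hw, swap_swap w⟩
  refine ⟨hbij, wt_swap, ?_⟩
  congr 1
  ext m
  constructor
  · rintro ⟨v, hv, rfl⟩
    exact ⟨swapP v, hmaps v hv, wt_swap v⟩
  · rintro ⟨w, hw, rfl⟩
    exact ⟨swapP w, hback w hw, (wt_swap w)⟩
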